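/- Let k be a field, V and W finite-dimensional k-vector spaces, and let (f, g) be a nilpotent pair, i.e. f : V →ₗ[k] W, g : W →ₗ[k] V with g ∘ f nilpotent. If v ∈ V and w ∈ W are both balanced vectors, then T[v] ⊓ T[g w] = ⊥ in V and T'[f v] ⊓ T'[w] = ⊥ in W; consequently the sums T[v] + T[g w] in V and T'[f v] + T'[w] in W are internal direct sums. -/
import Mathlib


/-- `orbitSpan T v` is the submodule `T[v]` spanned by `{T^i v : i ∈ ℕ}`. -/
def orbitSpan {k V : Type*} [Field k] [AddCommGroup V] [Module k V]
    (T : V →ₗ[k] V) (v : V) : Submodule k V :=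
  Submodule.span k (Set.range fun i : ℕ => (T ^ i) v)

section Aux

variable {k V W : Type*} [Field k] [AddCommGroup V] [Module k V]
    [AddCommGroup W] [Module k W]

lemma aux_comp_pow (f : V →ₗ[k] W) (g : W →ₗ[k] V) (n : ℕ) :
    f ∘ₗ (g ∘ₗ f) ^ n = ((f ∘ₗ g) ^ n) ∘ₗ f := by
  induction n with
  | zero => simp [Module.End.one_eq_id]
  | succ n ih =>
      rw [pow_succ, pow_succ, Module.End.mul_eq_comp, Module.End.mul_eq_comp,
        ← LinearMap.comp_assoc, ih]
      ext x; simp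

lemma aux_mem_orbitSpan_self (T : V →ₗ[k] V) (v : V) : v ∈ orbitSpan T v :=
  Submodule.subset_span ⟨0, by simp⟩

lemma aux_orbitSpan_invariant (T : V →ₗ[k] V) (v : V) {x : V}
    (hx : x ∈ orbitSpan T v) : T x ∈ orbitSpan T v := by
  have h : Submodule.map T (orbitSpan T v) ≤ orbitSpan T v := by
    rw [orbitSpan, Submodule.map_span_le]
    rintro _ ⟨i, rfl⟩
    exact Submodule.subset_span ⟨i + 1, show (T ^ (i + 1)) v = T ((T ^ i) v) by
      rw [pow_succ']; rfl⟩
  exact h ⟨x, hx, rfl⟩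

lemma aux_map_orbitSpan (f : V →ₗ[k] W) (g : W →ₗ[k] V) (v : V) :
    Submodule.map f (orbitSpan (g ∘ₗ f) v) = orbitSpan (f ∘ₗ g) (f v) := by
  have hfun : (fun i : ℕ => ((f ∘ₗ g) ^ i) (f v)) = (⇑f ∘ fun i : ℕ => ((g ∘ₗ f) ^ i) v) := by
    funext i
    simpa using (LinearMap.congr_fun (aux_comp_pow f g i) v).symm
  rw [orbitSpan, orbitSpan, Submodule.map_span, ← Set.range_comp, hfun]

lemma aux_injOn_of_finrank_eq [FiniteDimensional k V] [FiniteDimensional k W]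
    (f : V →ₗ[k] W) (p : Submodule k V)
    (h : Module.finrank k p = Module.finrank k (p.map f)) :
    ∀ x ∈ p, f x = 0 → x = 0 := by
  have hker : LinearMap.ker (f.domRestrict p) = ⊥ := by
    have hr : LinearMap.range (f.domRestrict p) = p.map f := by
      ext y
      simp [LinearMap.mem_range, Submodule.mem_map, LinearMap.domRestrict_apply]
    have := LinearMap.finrank_range_add_finrank_ker (f.domRestrict p)
    rw [hr, ← h] at this
    have hk0 : Module.finrank k (LinearMap.ker (f.domRestrict p)) = 0 := by omega
    exact Submodule.finrank_eq_zero.mp hk0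
  intro x hx hfx
  have : (⟨x, hx⟩ : p) ∈ LinearMap.ker (f.domRestrict p) := by
    simp [LinearMap.mem_ker, LinearMap.domRestrict_apply, hfx]
  rw [hker, Submodule.mem_bot] at this
  exact congrArg Subtype.val this

lemma aux_exists_socle {T : V →ₗ[k] V} (hT : IsNilpotent T) {U : Submodule k V}
    (hinv : ∀ x ∈ U, T x ∈ U) (hU : U ≠ ⊥) :
    ∃ x ∈ U, x ≠ 0 ∧ T x = 0 := by
  obtain ⟨u, hu, hu0⟩ := Submodule.exists_mem_ne_zero_of_ne_bot hU
  obtain ⟨n, hn⟩ := hT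
  have hP : ∃ d, (T ^ d) u = 0 := ⟨n, by rw [hn]; rfl⟩
  classical
  set d := Nat.find hP with hd
  have hd0 : d ≠ 0 := by
    intro h
    have := Nat.find_spec hP
    rw [← hd, h] at this
    simp at this
    exact hu0 this
  refine ⟨(T ^ (d - 1)) u, ?_, ?_, ?_⟩
  · have : ∀ i : ℕ, (T ^ i) u ∈ U := by
      intro i
      induction i with
      | zero => simpa using hu
      | succ i ih => rw [pow_succ']; exact hinv _ ih
    exact this _
  · exact Nat.find_min hP (Nat.sub_lt (Nat.pos_of_ne_zero hd0) one_pos)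
  · have : (T ^ d) u = 0 := Nat.find_spec hP
    calc T ((T ^ (d - 1)) u) = (T ^ d) u := by
          conv_rhs => rw [← Nat.succ_pred_eq_of_pos (Nat.pos_of_ne_zero hd0)]
          rw [pow_succ']; rfl
      _ = 0 := this

lemma aux_prod_equiv_sup {p q : Submodule k V} (h : p ⊓ q = ⊥) :
    Nonempty ((p × q) ≃ₗ[k] ↥(p ⊔ q)) := by
  refine ⟨LinearEquiv.ofBijective
    (LinearMap.codRestrict (p ⊔ q) ((p.subtype).coprod q.subtype)
      (fun x => add_mem (Submodule.mem_sup_left x.1.2) (Submodule.mem_sup_right x.2.2)))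
    ⟨?_, ?_⟩⟩
  · intro x y hxy
    have hxy' : (x.1 : V) + x.2 = (y.1 : V) + y.2 := congrArg Subtype.val hxy
    have hmem : (x.1 : V) - y.1 ∈ p ⊓ q := by
      constructor
      · exact sub_mem x.1.2 y.1.2
      · have : (x.1 : V) - y.1 = (y.2 : V) - x.2 := by
          rw [sub_eq_sub_iff_add_eq_add, hxy', add_comm]
        rw [this]; exact sub_mem y.2.2 x.2.2
    rw [h, Submodule.mem_bot, sub_eq_zero] at hmem
    have h2 : (x.2 : V) = y.2 := by
      have h' := hxy'
      rw [hmem] at h'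
      exact add_left_cancel h'
    exact Prod.ext (Subtype.ext hmem) (Subtype.ext h2)
  · rintro ⟨z, hz⟩
    obtain ⟨y, hy, z', hz', rfl⟩ := Submodule.mem_sup.mp hz
    exact ⟨(⟨y, hy⟩, ⟨z', hz'⟩), rfl⟩

end Aux

theorem balanced_balanced_orbitSpans_disjoint
    (k V W : Type*) [Field k] [AddCommGroup V] [Module k V] [FiniteDimensional k V]
    [AddCommGroup W] [Module k W] [FiniteDimensional k W]
    (f : V →ₗ[k] W) (g : W →ₗ[k] V) (hnil : IsNilpotent (g ∘ₗ f))
    (v : V) (w : W)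
    (hv : Module.finrank k (orbitSpan (g ∘ₗ f) v) =
      Module.finrank k (orbitSpan (f ∘ₗ g) (f v)))
    (hw : Module.finrank k (orbitSpan (f ∘ₗ g) w) =
      Module.finrank k (orbitSpan (g ∘ₗ f) (g w))) :
    orbitSpan (g ∘ₗ f) v ⊓ orbitSpan (g ∘ₗ f) (g w) = ⊥ ∧
    orbitSpan (f ∘ₗ g) (f v) ⊓ orbitSpan (f ∘ₗ g) w = ⊥ ∧
    Nonempty ((↥(orbitSpan (g ∘ₗ f) v) × ↥(orbitSpan (g ∘ₗ f) (g w))) ≃ₗ[k]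
      ↥(orbitSpan (g ∘ₗ f) v ⊔ orbitSpan (g ∘ₗ f) (g w))) ∧
    Nonempty ((↥(orbitSpan (f ∘ₗ g) (f v)) × ↥(orbitSpan (f ∘ₗ g) w)) ≃ₗ[k]
      ↥(orbitSpan (f ∘ₗ g) (f v) ⊔ orbitSpan (f ∘ₗ g) w)) := by
  set T : V →ₗ[k] V := g ∘ₗ f with hT
  set T' : W →ₗ[k] W := f ∘ₗ g with hT'
  -- nilpotency of T'
  have hnil' : IsNilpotent T' := by
    obtain ⟨n, hn⟩ := hnil
    refine ⟨n + 1, ?_⟩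
    rw [hT', pow_succ, Module.End.mul_eq_comp, ← LinearMap.comp_assoc, ← aux_comp_pow,
      ← hT, hn]
    ext x
    simp
  -- injectivity of f on T[v]
  have hfi : ∀ x ∈ orbitSpan T v, f x = 0 → x = 0 := by
    apply aux_injOn_of_finrank_eq
    rw [aux_map_orbitSpan f g v, ← hT', ← hv]
  -- injectivity of g on T'[w]
  have hgi : ∀ y ∈ orbitSpan T' w, g y = 0 → y = 0 := by
    apply aux_injOn_of_finrank_eq
    rw [aux_map_orbitSpan g f w, ← hT, ← hw]
  have h1 : orbitSpan T v ⊓ orbitSpan T (g w) = ⊥ := by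
    by_contra h
    obtain ⟨x, hx, hx0, hTx⟩ := aux_exists_socle hnil
      (fun x hx => Submodule.mem_inf.mpr ⟨aux_orbitSpan_invariant T v (Submodule.mem_inf.mp hx).1,
        aux_orbitSpan_invariant T (g w) (Submodule.mem_inf.mp hx).2⟩) h
    -- x ∈ T[g w] = map g T'[w]
    have hx2 : x ∈ Submodule.map g (orbitSpan T' w) := by
      rw [hT', aux_map_orbitSpan g f w, ← hT]; exact (Submodule.mem_inf.mp hx).2
    obtain ⟨y, hy, rfl⟩ := hx2
    have hfgy : f (g y) ∈ orbitSpan T' w := by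
      have := aux_orbitSpan_invariant T' w hy
      rwa [hT', LinearMap.comp_apply] at this
    have hgfgy : g (f (g y)) = 0 := by
      have : T (g y) = 0 := hTx
      rwa [hT, LinearMap.comp_apply] at this
    have hfgy0 : f (g y) = 0 := hgi _ hfgy hgfgy
    exact hx0 (hfi _ (Submodule.mem_inf.mp hx).1 hfgy0)
  have h2 : orbitSpan T' (f v) ⊓ orbitSpan T' w = ⊥ := by
    by_contra h
    obtain ⟨y, hy, hy0, hTy⟩ := aux_exists_socle hnil'
      (fun y hy => Submodule.mem_inf.mpr ⟨aux_orbitSpan_invariant T' (f v) (Submodule.mem_inf.mp hy).1,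
        aux_orbitSpan_invariant T' w (Submodule.mem_inf.mp hy).2⟩) h
    have hy1 : y ∈ Submodule.map f (orbitSpan T v) := by
      rw [hT, aux_map_orbitSpan f g v, ← hT']; exact (Submodule.mem_inf.mp hy).1
    obtain ⟨x, hx, rfl⟩ := hy1
    have hgfx : g (f x) ∈ orbitSpan T v := by
      have := aux_orbitSpan_invariant T v hx
      rwa [hT, LinearMap.comp_apply] at this
    have hfgfx : f (g (f x)) = 0 := by
      have : T' (f x) = 0 := hTy
      rwa [hT', LinearMap.comp_apply] at this
    have hgfx0 : g (f x) = 0 := hfi _ hgfx hfgfx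
    exact hy0 (hgi _ (Submodule.mem_inf.mp hy).2 hgfx0)
  exact ⟨h1, h2, aux_prod_equiv_sup h1, aux_prod_equiv_sup h2⟩
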